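/- Let X be a Banach space and C a nonempty set of real-valued bounded Lipschitz everywhere-Gateaux-differentiable functions on X which is relatively compact in the Banach space C_b^G(X) with norm ‖f‖_G = max(‖f‖_∞, ‖d_Gf‖_∞). For x̂ ∈ [C]^×, the multiplier set satisfies T_C(x̂) ⊂ { d_Gψ(x̂) : ψ(x̂) = 0, ψ in the ‖·‖_G-closed convex hull of C }. If moreover C is convex and ‖·‖_G-compact, then T_C(x̂) = { d_Gψ(x̂) : ψ(x̂) = 0, ψ ∈ C }. -/

import Mathlib

open Topology Filter Set

noncomputable section

section Defs

variable {E : Type*} [AddCommGroup E] [Module ℝ E] [TopologicalSpace E]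

/-- The canonical map from the topological dual of `E` to the weak-star dual. -/
def toWD (φ : E →L[ℝ] ℝ) : WeakDual ℝ E := φ

/-- The weak-star closed convex hull of a set of continuous linear functionals. -/
def wcch (B : Set (E →L[ℝ] ℝ)) : Set (WeakDual ℝ E) :=
  closure (convexHull ℝ (toWD '' B))

/-- `f` is Gateaux differentiable at `x` with Gateaux-differential `f'`. -/
def HasGateauxAt (f : E → ℝ) (f' : E →L[ℝ] ℝ) (x : E) : Prop :=
  ∀ v : E, Tendsto (fun t : ℝ => (f (x + t • v) - f x - t * f' v) / t) (𝓝[>] 0) (𝓝 0)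

/-- The family `C` is equi-Gateaux differentiable at `x`, with differentials given by `D`. -/
def EquiGateauxAt (C : Set (E → ℝ)) (D : (E → ℝ) → E →L[ℝ] ℝ) (x : E) : Prop :=
  (∀ φ ∈ C, HasGateauxAt φ (D φ) x) ∧
  ∀ v : E, ∀ ε : ℝ, 0 < ε → ∃ δ : ℝ, 0 < δ ∧ ∀ t : ℝ, 0 < t → t < δ →
    ∀ φ ∈ C, |(φ (x + t • v) - φ x - t * (D φ) v) / t| ≤ ε

/-- The family `C` is equi-lower semicontinuous at `x`. -/
def EquiLscAt (C : Set (E → ℝ)) (x : E) : Prop :=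
  ∀ ε : ℝ, 0 < ε → ∃ O ∈ 𝓝 x, ∀ y ∈ O, ∀ φ ∈ C, φ y - φ x > -ε

/-- `[C]^× = {x ∈ E : φ(x) ≥ 0 for all φ ∈ C}`. -/
def polarSet (C : Set (E → ℝ)) : Set E := {x | ∀ φ ∈ C, 0 ≤ φ x}

/-- The multiplier set `T_C(x̂)`. -/
def multSet (C : Set (E → ℝ)) (D : (E → ℝ) → E →L[ℝ] ℝ) (x : E) : Set (WeakDual ℝ E) :=
  ⋂ n ∈ {n : ℕ | 1 ≤ n}, wcch (D '' {φ | φ ∈ C ∧ φ x ∈ Icc (0:ℝ) (1/(n:ℝ))})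

/-- `F` is weak-admissible at `x ∈ F`, determined by `C` (with differentials `D`). -/
def WeakAdmissibleAt (F : Set E) (C : Set (E → ℝ)) (D : (E → ℝ) → E →L[ℝ] ℝ) (x : E) : Prop :=
  x ∈ F ∧ C.Nonempty ∧ F = polarSet C ∧ EquiGateauxAt C D x ∧
    ({φ | φ ∈ C ∧ φ x ≠ 0} = ∅ ∨ EquiLscAt {φ | φ ∈ C ∧ φ x ≠ 0} x) ∧
    IsCompact (wcch (D '' C))

end Defs

section NormedDefs

variable {Y : Type*} [NormedAddCommGroup Y] [NormedSpace ℝ Y]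

/-- `A` is admissible at `x ∈ A`, determined by `C` (with differentials `D`). -/
def AdmissibleAt (A : Set Y) (C : Set (Y → ℝ)) (D : (Y → ℝ) → Y →L[ℝ] ℝ) (x : Y) : Prop :=
  x ∈ A ∧ C.Nonempty ∧ A = polarSet C ∧ EquiGateauxAt C D x ∧
    (∃ r : NNReal, ∃ ε : ℝ, 0 < ε ∧ ∀ φ ∈ C, LipschitzOnWith r φ (Metric.ball x ε)) ∧
    toWD (0 : Y →L[ℝ] ℝ) ∉ wcch (D '' C)

/-- The recession cone of a set. -/
def recCone (K : Set Y) : Set Y := {v | ∀ l : ℝ, 0 < l → ∀ x ∈ K, x + l • v ∈ K}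

/-- The barrier cone of `K`: functionals bounded above on `K`. -/
def barCone (K : Set Y) : Set (Y →L[ℝ] ℝ) := {φ | BddAbove (φ '' K)}

/-- The dual positive cone `A*`. -/
def posDualCone (A : Set Y) : Set (Y →L[ℝ] ℝ) := {φ | ∀ y ∈ A, 0 ≤ φ y}

end NormedDefs

section Stmt8

variable {X : Type*} [NormedAddCommGroup X] [NormedSpace ℝ X]

/-- Elements of `C_b^G(X)` are modelled as pairs `(f, d_Gf)`: a function together with its
(everywhere defined) Gateaux-differential map. `CbGSet` is the set of such pairs which are
bounded, Lipschitz and everywhere Gateaux differentiable with the given differential. -/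
def CbGSet : Set ((X → ℝ) × (X → X →L[ℝ] ℝ)) :=
  {p | (∃ M : ℝ, ∀ x : X, |p.1 x| ≤ M) ∧ (∃ L : NNReal, LipschitzWith L p.1) ∧
       (∃ M : ℝ, ∀ x : X, ‖p.2 x‖ ≤ M) ∧ (∀ x : X, HasGateauxAt p.1 (p.2 x) x)}

/-- The `C_b^G`-norm distance `‖f − g‖_G = max(‖f − g‖_∞, ‖d_Gf − d_Gg‖_∞)` between two
pairs. -/
noncomputable def gNormDist (p q : (X → ℝ) × (X → X →L[ℝ] ℝ)) : ℝ :=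
  max (⨆ x : X, |p.1 x - q.1 x|) (⨆ x : X, ‖p.2 x - q.2 x‖)



namespace Stmt8Aux

open scoped ENNReal

variable {X : Type*} [NormedAddCommGroup X] [NormedSpace ℝ X]

abbrev ZZ (X : Type*) [NormedAddCommGroup X] [NormedSpace ℝ X] :=
  lp (fun _ : X => ℝ) ∞ × lp (fun _ : X => X →L[ℝ] ℝ) ∞

def piL : ZZ X →ₗ[ℝ] (X → ℝ) × (X → X →L[ℝ] ℝ) where
  toFun a := (fun x => a.1 x, fun x => a.2 x)
  map_add' a b := by
    refine Prod.ext ?_ ?_ <;> funext x <;>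
      simp [Prod.fst_add, Prod.snd_add, lp.coeFn_add]
  map_smul' c a := by
    refine Prod.ext ?_ ?_ <;> funext x <;>
      simp [Prod.smul_fst, Prod.smul_snd, lp.coeFn_smul]

theorem gAdd {f g : X → ℝ} {f' g' : X →L[ℝ] ℝ} {x : X}
    (hf : HasGateauxAt f f' x) (hg : HasGateauxAt g g' x) :
    HasGateauxAt (fun y => f y + g y) (f' + g') x := by
  intro v
  have h := (hf v).add (hg v)
  rw [add_zero] at h
  refine h.congr fun t => ?_
  rw [← add_div]
  congr 1
  simp only [ContinuousLinearMap.add_apply]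
  ring

theorem gSmul (c : ℝ) {f : X → ℝ} {f' : X →L[ℝ] ℝ} {x : X} (hf : HasGateauxAt f f' x) :
    HasGateauxAt (fun y => c * f y) (c • f') x := by
  intro v
  have h := (hf v).const_mul c
  rw [mul_zero] at h
  refine h.congr fun t => ?_
  rw [← mul_div_assoc]
  congr 1
  simp only [ContinuousLinearMap.smul_apply, smul_eq_mul]
  ring

theorem gSub {f g : X → ℝ} {f' g' : X →L[ℝ] ℝ} {x : X}
    (hf : HasGateauxAt f f' x) (hg : HasGateauxAt g g' x) :
    HasGateauxAt (fun y => f y - g y) (f' - g') x := by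
  intro v
  have h := (hf v).sub (hg v)
  rw [sub_zero] at h
  refine h.congr fun t => ?_
  rw [div_sub_div_same]
  congr 1
  simp only [ContinuousLinearMap.sub_apply]
  ring

theorem abs_sub_le_of_gateaux {f : X → ℝ} {D : X → X →L[ℝ] ℝ} {M : ℝ}
    (hf : ∀ y, HasGateauxAt f (D y) y) (hM : ∀ y, ‖D y‖ ≤ M)
    (hc : Continuous f) (x y : X) : |f y - f x| ≤ M * ‖y - x‖ := by
  set v := y - x with hv
  have hder : ∀ t : ℝ, HasDerivWithinAt (fun s : ℝ => f (x + s • v)) ((D (x + t • v)) v) (Ici t) t := by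
    intro t
    rw [← hasDerivWithinAt_Ioi_iff_Ici, hasDerivWithinAt_iff_tendsto_slope,
      Set.diff_singleton_eq_self (by simp : t ∉ Ioi t)]
    have hmap : Tendsto (fun s : ℝ => s - t) (𝓝[Set.Ioi t] t) (𝓝[>] (0:ℝ)) := by
      refine tendsto_nhdsWithin_of_tendsto_nhds_of_eventually_within _ ?_ ?_
      · have h0 : Tendsto (fun s : ℝ => s - t) (𝓝 t) (𝓝 (t - t)) :=
          (continuous_id.sub continuous_const).tendsto t
        rw [sub_self] at h0
        exact h0.mono_left nhdsWithin_le_nhds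
      · filter_upwards [self_mem_nhdsWithin] with s hs
        simpa [sub_pos] using hs
    have hQ : Tendsto (fun u : ℝ => (f (x + (t + u) • v) - f (x + t • v)) / u - (D (x + t • v)) v)
        (𝓝[>] (0:ℝ)) (𝓝 0) := by
      refine (hf (x + t • v) v).congr' ?_
      filter_upwards [self_mem_nhdsWithin] with u hu
      have hu0 : (u:ℝ) ≠ 0 := ne_of_gt hu
      have hx' : x + t • v + u • v = x + (t + u) • v := by
        rw [add_smul]; abel
      rw [hx', sub_div, mul_div_cancel_left₀ _ hu0]
    rw [← tendsto_sub_nhds_zero_iff]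
    have hcomp := hQ.comp hmap
    refine hcomp.congr fun s => ?_
    have hts : t + (s - t) = s := by ring
    show (f (x + (t + (s - t)) • v) - f (x + t • v)) / (s - t) - (D (x + t • v)) v = _
    rw [hts, slope_def_field]
  have hcont : ContinuousOn (fun s : ℝ => f (x + s • v)) (Icc 0 1) :=
    (hc.comp (continuous_const.add (continuous_id.smul continuous_const))).continuousOn
  have hbound : ∀ t ∈ Ico (0:ℝ) 1, ‖(D (x + t • v)) v‖ ≤ M * ‖v‖ := fun t _ =>
    le_trans ((D _).le_opNorm v) (mul_le_mul_of_nonneg_right (hM _) (norm_nonneg v))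
  have key := norm_image_sub_le_of_norm_deriv_right_le_segment hcont (fun t _ => hder t)
    hbound 1 (right_mem_Icc.2 zero_le_one)
  have hxy : x + v = y := by rw [hv]; abel
  rw [← hxy]
  simpa [Real.norm_eq_abs] using key


theorem memℓp_fst {p : (X → ℝ) × (X → X →L[ℝ] ℝ)} (hp : p ∈ CbGSet) :
    Memℓp p.1 (∞ : ℝ≥0∞) := by
  obtain ⟨⟨M, hM⟩, -, -, -⟩ := hp
  exact memℓp_infty ⟨M, by rintro y ⟨x, rfl⟩; simpa [Real.norm_eq_abs] using hM x⟩

theorem memℓp_snd {p : (X → ℝ) × (X → X →L[ℝ] ℝ)} (hp : p ∈ CbGSet) :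
    Memℓp p.2 (∞ : ℝ≥0∞) := by
  obtain ⟨-, -, ⟨M, hM⟩, -⟩ := hp
  exact memℓp_infty ⟨M, by rintro y ⟨x, rfl⟩; exact hM x⟩

def toZ (p : (X → ℝ) × (X → X →L[ℝ] ℝ)) (hp : p ∈ CbGSet) : ZZ X :=
  (⟨p.1, memℓp_fst hp⟩, ⟨p.2, memℓp_snd hp⟩)

@[simp] theorem piL_toZ (p : (X → ℝ) × (X → X →L[ℝ] ℝ)) (hp : p ∈ CbGSet) :
    piL (toZ p hp) = p := rfl

theorem gdist_eq' (a b : ZZ X) :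
    max (⨆ x : X, |a.1 x - b.1 x|) (⨆ x : X, ‖a.2 x - b.2 x‖) = ‖a - b‖ := by
  have h1 : ‖(a - b).1‖ = ⨆ x : X, |a.1 x - b.1 x| := by
    rw [Prod.fst_sub, lp.norm_eq_ciSup]
    exact iSup_congr fun x => by rw [lp.coeFn_sub, Pi.sub_apply, Real.norm_eq_abs]
  have h2 : ‖(a - b).2‖ = ⨆ x : X, ‖a.2 x - b.2 x‖ := by
    rw [Prod.snd_sub, lp.norm_eq_ciSup]
    exact iSup_congr fun x => by rw [lp.coeFn_sub, Pi.sub_apply]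
  rw [Prod.norm_def, h1, h2]

theorem hasGateauxAt_limit
    {f : ℕ → X → ℝ} {D : ℕ → X → X →L[ℝ] ℝ} {g : X → ℝ} {G : X → X →L[ℝ] ℝ}
    {S : ℕ → ℝ}
    (hGat : ∀ k y, HasGateauxAt (f k) (D k y) y)
    (hcont : ∀ k, Continuous (f k))
    (hfg : ∀ y, Tendsto (fun k => f k y) atTop (𝓝 (g y)))
    (hDS : ∀ k y, ‖D k y - G y‖ ≤ S k)
    (hS0 : Tendsto S atTop (𝓝 0))
    (x : X) : HasGateauxAt g (G x) x := by
  intro v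
  have hDv : ∀ y : X, Tendsto (fun k => (D k y) v) atTop (𝓝 (G y v)) := by
    intro y
    rw [← tendsto_sub_nhds_zero_iff]
    refine squeeze_zero_norm (fun k => ?_) (by simpa using hS0.mul_const ‖v‖)
    calc ‖(D k y) v - (G y) v‖ = ‖(D k y - G y) v‖ := by
          rw [ContinuousLinearMap.sub_apply]
      _ ≤ ‖D k y - G y‖ * ‖v‖ := (D k y - G y).le_opNorm v
      _ ≤ S k * ‖v‖ := mul_le_mul_of_nonneg_right (hDS k y) (norm_nonneg v)
  set q : ℕ → ℝ → ℝ := fun k t => (f k (x + t • v) - f k x - t * (D k x) v) / t with hq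
  set qg : ℝ → ℝ := fun t => (g (x + t • v) - g x - t * (G x) v) / t with hqg
  have hqk : ∀ t : ℝ, Tendsto (fun k => q k t) atTop (𝓝 (qg t)) := fun t =>
    (((hfg (x + t • v)).sub (hfg x)).sub ((hDv x).const_mul t)).div_const t
  have hbd : ∀ j k : ℕ, ∀ y, ‖D j y - D k y‖ ≤ S j + S k := by
    intro j k y
    calc ‖D j y - D k y‖ = ‖(D j y - G y) - (D k y - G y)‖ := by abel_nf
      _ ≤ ‖D j y - G y‖ + ‖D k y - G y‖ := norm_sub_le _ _
      _ ≤ S j + S k := add_le_add (hDS j y) (hDS k y)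
  have hdiff : ∀ j k : ℕ, ∀ t : ℝ, 0 < t → |q j t - q k t| ≤ 2 * ((S j + S k) * ‖v‖) := by
    intro j k t ht
    have hsub : ∀ y, HasGateauxAt (fun z => f j z - f k z) (D j y - D k y) y :=
      fun y => gSub (hGat j y) (hGat k y)
    have hA := abs_sub_le_of_gateaux hsub (hbd j k) ((hcont j).sub (hcont k)) x (x + t • v)
    have hnorm : ‖x + t • v - x‖ = t * ‖v‖ := by
      rw [add_sub_cancel_left, norm_smul, Real.norm_eq_abs, abs_of_pos ht]
    rw [hnorm] at hA
    have hDx : |(D j x) v - (D k x) v| ≤ (S j + S k) * ‖v‖ := by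
      calc |(D j x) v - (D k x) v| = ‖(D j x - D k x) v‖ := by
            rw [ContinuousLinearMap.sub_apply, Real.norm_eq_abs]
        _ ≤ ‖D j x - D k x‖ * ‖v‖ := (D j x - D k x).le_opNorm v
        _ ≤ (S j + S k) * ‖v‖ := mul_le_mul_of_nonneg_right (hbd j k x) (norm_nonneg v)
    have hqq : q j t - q k t =
        (((f j (x + t • v) - f k (x + t • v)) - (f j x - f k x))
          - t * ((D j x) v - (D k x) v)) / t := by
      simp only [hq]
      rw [div_sub_div_same]
      congr 1
      ring
    rw [hqq, abs_div, abs_of_pos ht, div_le_iff₀ ht]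
    calc |((f j (x + t • v) - f k (x + t • v)) - (f j x - f k x))
          - t * ((D j x) v - (D k x) v)|
        ≤ |(f j (x + t • v) - f k (x + t • v)) - (f j x - f k x)|
          + |t * ((D j x) v - (D k x) v)| := abs_sub _ _
      _ ≤ (S j + S k) * (t * ‖v‖) + t * ((S j + S k) * ‖v‖) := by
          refine add_le_add hA ?_
          rw [abs_mul, abs_of_pos ht]
          exact mul_le_mul_of_nonneg_left hDx (le_of_lt ht)
      _ = 2 * ((S j + S k) * ‖v‖) * t := by ring
  have hqgk : ∀ k : ℕ, ∀ t : ℝ, 0 < t → |qg t - q k t| ≤ 2 * (S k * ‖v‖) := by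
    intro k t ht
    have h1 : Tendsto (fun j => |q j t - q k t|) atTop (𝓝 |qg t - q k t|) :=
      ((hqk t).sub_const _).abs
    have h2 : Tendsto (fun j => 2 * ((S j + S k) * ‖v‖)) atTop (𝓝 (2 * ((0 + S k) * ‖v‖))) :=
      (((hS0.add_const (S k)).mul_const ‖v‖).const_mul 2)
    rw [zero_add] at h2
    exact le_of_tendsto_of_tendsto' h1 h2 fun j => hdiff j k t ht
  rw [show qg = fun t : ℝ => (g (x + t • v) - g x - t * (G x) v) / t from rfl] at *
  show Tendsto (fun t : ℝ => (g (x + t • v) - g x - t * (G x) v) / t) (𝓝[>] (0:ℝ)) (𝓝 0)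
  rw [NormedAddCommGroup.tendsto_nhds_zero]
  intro ε hε
  have hεp : (0:ℝ) < ε / 2 := by linarith
  obtain ⟨k, hk⟩ : ∃ k, 2 * (S k * ‖v‖) < ε / 2 := by
    have : Tendsto (fun k => 2 * (S k * ‖v‖)) atTop (𝓝 (2 * (0 * ‖v‖))) :=
      ((hS0.mul_const ‖v‖).const_mul 2)
    rw [zero_mul, mul_zero] at this
    exact ((this.eventually (eventually_lt_nhds hεp)).exists)
  have hqk0 : Tendsto (q k) (𝓝[>] (0:ℝ)) (𝓝 0) := hGat k x v
  rw [NormedAddCommGroup.tendsto_nhds_zero] at hqk0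
  filter_upwards [hqk0 (ε / 2) hεp, self_mem_nhdsWithin] with t hqkt ht
  have ht' : (0:ℝ) < t := ht
  have h3 := hqgk k t ht'
  have : |qg t| ≤ |qg t - q k t| + |q k t| := by
    calc |qg t| = |(qg t - q k t) + q k t| := by ring_nf
      _ ≤ |qg t - q k t| + |q k t| := abs_add_le _ _
  rw [Real.norm_eq_abs] at hqkt ⊢
  calc |qg t| ≤ |qg t - q k t| + |q k t| := this
    _ < 2 * (S k * ‖v‖) + ε / 2 := add_lt_add_of_le_of_lt h3 hqkt
    _ < ε / 2 + ε / 2 := by linarith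
    _ = ε := by ring


theorem piL_mem_of_tendsto {u : ℕ → ZZ X} {a : ZZ X}
    (hu : ∀ k, Continuous ((piL (u k)).1 : X → ℝ) ∧
      ∀ y, HasGateauxAt (piL (u k)).1 ((piL (u k)).2 y) y)
    (hlim : Tendsto u atTop (𝓝 a)) : piL a ∈ (CbGSet : Set ((X → ℝ) × (X → X →L[ℝ] ℝ))) := by
  set S : ℕ → ℝ := fun k => ‖u k - a‖ with hS
  have hS0 : Tendsto S atTop (𝓝 0) := tendsto_iff_norm_sub_tendsto_zero.1 hlim
  have hfb : ∀ (k : ℕ) (y : X), |(u k).1 y - a.1 y| ≤ S k := by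
    intro k y
    calc |(u k).1 y - a.1 y| = ‖((u k).1 - a.1) y‖ := by
          rw [lp.coeFn_sub, Pi.sub_apply, Real.norm_eq_abs]
      _ ≤ ‖(u k).1 - a.1‖ := lp.norm_apply_le_norm ENNReal.top_ne_zero _ _
      _ ≤ ‖u k - a‖ := by rw [← Prod.fst_sub]; exact norm_fst_le _
  have hDb : ∀ (k : ℕ) (y : X), ‖(u k).2 y - a.2 y‖ ≤ S k := by
    intro k y
    calc ‖(u k).2 y - a.2 y‖ = ‖((u k).2 - a.2) y‖ := by rw [lp.coeFn_sub, Pi.sub_apply]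
      _ ≤ ‖(u k).2 - a.2‖ := lp.norm_apply_le_norm ENNReal.top_ne_zero _ _
      _ ≤ ‖u k - a‖ := by rw [← Prod.snd_sub]; exact norm_snd_le _
  have hfg : ∀ y : X, Tendsto (fun k => (u k).1 y) atTop (𝓝 (a.1 y)) := by
    intro y
    rw [← tendsto_sub_nhds_zero_iff]
    exact squeeze_zero_norm (fun k => by simpa [Real.norm_eq_abs] using hfb k y) hS0
  have hGat : ∀ y : X, HasGateauxAt (fun x : X => a.1 x) (a.2 y) y := fun y =>
    hasGateauxAt_limit (f := fun k => ((piL (u k)).1)) (D := fun k => (piL (u k)).2)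
      (g := fun x => a.1 x) (G := fun x => a.2 x) (S := S)
      (fun k y => (hu k).2 y) (fun k => (hu k).1) hfg hDb hS0 y
  have hLip_k : ∀ (k : ℕ) (y z : X), |(u k).1 y - (u k).1 z| ≤ ‖u k‖ * ‖y - z‖ := by
    intro k y z
    refine abs_sub_le_of_gateaux (f := (piL (u k)).1) (D := (piL (u k)).2)
      (fun w => (hu k).2 w) (fun w => ?_) (hu k).1 z y
    calc ‖(u k).2 w‖ ≤ ‖(u k).2‖ := lp.norm_apply_le_norm ENNReal.top_ne_zero _ _
      _ ≤ ‖u k‖ := norm_snd_le _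
  have hLip : ∀ y z : X, |a.1 y - a.1 z| ≤ ‖a‖ * ‖y - z‖ := by
    intro y z
    have h1 : Tendsto (fun k => |(u k).1 y - (u k).1 z|) atTop (𝓝 |a.1 y - a.1 z|) :=
      ((hfg y).sub (hfg z)).abs
    have h2 : Tendsto (fun k => ‖u k‖ * ‖y - z‖) atTop (𝓝 (‖a‖ * ‖y - z‖)) :=
      hlim.norm.mul_const _
    exact le_of_tendsto_of_tendsto' h1 h2 fun k => hLip_k k y z
  refine ⟨⟨‖a.1‖, fun x => ?_⟩, ⟨‖a‖.toNNReal, ?_⟩, ⟨‖a.2‖, fun x => ?_⟩, hGat⟩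
  · have h := lp.norm_apply_le_norm ENNReal.top_ne_zero a.1 x
    rw [Real.norm_eq_abs] at h
    exact h
  · refine LipschitzWith.of_dist_le_mul fun y z => ?_
    rw [Real.dist_eq, dist_eq_norm]
    have := hLip y z
    rwa [Real.coe_toNNReal _ (norm_nonneg a)]
  · exact lp.norm_apply_le_norm ENNReal.top_ne_zero a.2 x

set_option maxHeartbeats 1000000 in
theorem convexHull_CZ_subset {P : Set ((X → ℝ) × (X → X →L[ℝ] ℝ))} (hPsub : P ⊆ CbGSet) :
    convexHull ℝ {b : ZZ X | piL b ∈ P} ⊆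
      {b : ZZ X | Continuous ((piL b).1 : X → ℝ) ∧
        ∀ y, HasGateauxAt (piL b).1 ((piL b).2 y) y} := by
  refine convexHull_min ?_ ?_
  · intro b hb
    obtain ⟨-, ⟨L, hL⟩, -, hG⟩ := hPsub hb
    exact ⟨hL.continuous, hG⟩
  · rintro b hb c hc θ μ hθ hμ hsum
    have e1 : ((piL (θ • b + μ • c)).1 : X → ℝ)
        = fun x => θ * (piL b).1 x + μ * (piL c).1 x := by
      funext x
      show ((θ • b + μ • c).1 : X → ℝ) x = _
      simp only [Prod.fst_add, Prod.smul_fst, lp.coeFn_add, lp.coeFn_smul, Pi.add_apply,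
        Pi.smul_apply, smul_eq_mul]
      rfl
    have e2 : ∀ y : X, (piL (θ • b + μ • c)).2 y = θ • (piL b).2 y + μ • (piL c).2 y := by
      intro y
      show ((θ • b + μ • c).2 : X → X →L[ℝ] ℝ) y = _
      simp only [Prod.snd_add, Prod.smul_snd, lp.coeFn_add, lp.coeFn_smul, Pi.add_apply,
        Pi.smul_apply]
      rfl
    constructor
    · rw [e1]
      exact (continuous_const.mul hb.1).add (continuous_const.mul hc.1)
    · intro y
      rw [e1, e2 y]
      exact gAdd (gSmul θ (hb.2 y)) (gSmul μ (hc.2 y))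

def evW (xh : X) : ZZ X →ₗ[ℝ] WeakDual ℝ X where
  toFun b := toWD (b.2 xh)
  map_add' b c := by
    show toWD ((b.2 + c.2) xh) = toWD (b.2 xh) + toWD (c.2 xh)
    rw [lp.coeFn_add, Pi.add_apply]; rfl
  map_smul' r b := by
    show toWD ((r • b.2) xh) = r • toWD (b.2 xh)
    rw [lp.coeFn_smul, Pi.smul_apply]; rfl

theorem snd_eval_lipschitz (xh : X) :
    LipschitzWith 1 (fun b : ZZ X => (b.2 xh : X →L[ℝ] ℝ)) := by
  refine LipschitzWith.of_dist_le_mul fun b c => ?_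
  rw [dist_eq_norm, dist_eq_norm]
  calc ‖b.2 xh - c.2 xh‖ = ‖(b.2 - c.2) xh‖ := by rw [lp.coeFn_sub, Pi.sub_apply]
    _ ≤ ‖b.2 - c.2‖ := lp.norm_apply_le_norm ENNReal.top_ne_zero _ _
    _ ≤ ‖b - c‖ := by rw [← Prod.snd_sub]; exact norm_snd_le _
    _ = 1 * ‖b - c‖ := (one_mul _).symm

theorem evW_continuous (xh : X) : Continuous (evW xh : ZZ X → WeakDual ℝ X) := by
  apply WeakDual.continuous_of_continuous_eval
  intro y
  exact (ContinuousLinearMap.apply ℝ ℝ y).continuous.comp (snd_eval_lipschitz xh).continuous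

def e1L (xh : X) : ZZ X →ₗ[ℝ] ℝ where
  toFun b := b.1 xh
  map_add' b c := by
    show ((b.1 + c.1 : lp (fun _ : X => ℝ) ∞) : X → ℝ) xh = _
    rw [lp.coeFn_add, Pi.add_apply]
  map_smul' r b := by
    show ((r • b.1 : lp (fun _ : X => ℝ) ∞) : X → ℝ) xh = _
    rw [lp.coeFn_smul, Pi.smul_apply]; rfl

theorem e1L_continuous (xh : X) : Continuous (e1L xh : ZZ X → ℝ) := by
  refine LipschitzWith.continuous (K := 1) (LipschitzWith.of_dist_le_mul fun b c => ?_)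
  rw [Real.dist_eq, dist_eq_norm]
  calc |b.1 xh - c.1 xh| = ‖(b.1 - c.1) xh‖ := by
        rw [lp.coeFn_sub, Pi.sub_apply, Real.norm_eq_abs]
    _ ≤ ‖b.1 - c.1‖ := lp.norm_apply_le_norm ENNReal.top_ne_zero _ _
    _ ≤ ‖b - c‖ := by rw [← Prod.fst_sub]; exact norm_fst_le _
    _ = 1 * ‖b - c‖ := (one_mul _).symm

end Stmt8Aux

open Stmt8Aux in
theorem gdist_piL_eq {X : Type*} [NormedAddCommGroup X] [NormedSpace ℝ X]
    (a b : ZZ X) : gNormDist (piL a) (piL b) = ‖a - b‖ :=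
  gdist_eq' a b


set_option maxHeartbeats 2000000 in
set_option synthInstance.maxHeartbeats 1000000 in
/-- If `C` (modelled as a set `P` of pairs) is a nonempty relatively compact
subset of `(C_b^G(X), ‖·‖_G)` and `xh ∈ [C]^×`, then
`T_C(xh) ⊆ {d_Gψ(xh) : ψ(xh) = 0, ψ ∈ ‖·‖_G-closed convex hull of C}`; if moreover `C` is
convex and `‖·‖_G`-compact, then `T_C(xh) = {d_Gψ(xh) : ψ(xh) = 0, ψ ∈ C}`. -/
theorem multSet_subset_of_relatively_compact [CompleteSpace X]
    (P : Set ((X → ℝ) × (X → X →L[ℝ] ℝ))) (hPne : P.Nonempty) (hPsub : P ⊆ CbGSet)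
    (hrc : ∀ u : ℕ → (X → ℝ) × (X → X →L[ℝ] ℝ), (∀ n, u n ∈ P) →
      ∃ σ : ℕ → ℕ, StrictMono σ ∧ ∃ q ∈ CbGSet,
        Filter.Tendsto (fun n => gNormDist (u (σ n)) q) Filter.atTop (𝓝 0))
    (xh : X) (hx : ∀ p ∈ P, 0 ≤ p.1 xh) :
    ((⋂ n ∈ {n : ℕ | 1 ≤ n},
        wcch {q : X →L[ℝ] ℝ | ∃ p ∈ P, p.1 xh ∈ Icc (0:ℝ) (1/(n:ℝ)) ∧ p.2 xh = q})
      ⊆ {z : WeakDual ℝ X | ∃ ψ : (X → ℝ) × (X → X →L[ℝ] ℝ), ψ ∈ CbGSet ∧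
          (∃ u : ℕ → (X → ℝ) × (X → X →L[ℝ] ℝ), (∀ n, u n ∈ convexHull ℝ P) ∧
            Filter.Tendsto (fun n => gNormDist (u n) ψ) Filter.atTop (𝓝 0)) ∧
          ψ.1 xh = 0 ∧ toWD (ψ.2 xh) = z}) ∧
    (Convex ℝ P →
      (∀ u : ℕ → (X → ℝ) × (X → X →L[ℝ] ℝ), (∀ n, u n ∈ P) →
        ∃ σ : ℕ → ℕ, StrictMono σ ∧ ∃ q ∈ P,
          Filter.Tendsto (fun n => gNormDist (u (σ n)) q) Filter.atTop (𝓝 0)) →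
      (⋂ n ∈ {n : ℕ | 1 ≤ n},
          wcch {q : X →L[ℝ] ℝ | ∃ p ∈ P, p.1 xh ∈ Icc (0:ℝ) (1/(n:ℝ)) ∧ p.2 xh = q})
        = {z : WeakDual ℝ X | ∃ ψ ∈ P, ψ.1 xh = 0 ∧ toWD (ψ.2 xh) = z}) := by
  classical
  open Stmt8Aux in
  -- the ambient Banach space `Z` and distinguished subsets
  have hCb : ∀ p ∈ P, p ∈ CbGSet := fun p hp => hPsub hp
  set CZ : Set (ZZ X) := {b : ZZ X | piL b ∈ P} with hCZ
  set CZn : ℕ → Set (ZZ X) :=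
    fun n => {b : ZZ X | piL b ∈ P ∧ (piL b).1 xh ∈ Icc (0:ℝ) (1/(n:ℝ))} with hCZn
  set K : Set (ZZ X) := closure (convexHull ℝ CZ) with hKdef
  set Kn : ℕ → Set (ZZ X) := fun n => closure (convexHull ℝ (CZn n)) with hKndef
  have hKnK : ∀ n, Kn n ⊆ K := fun n =>
    closure_mono (convexHull_mono fun b hb => hb.1)
  -- relative sequential compactness of `CZ` in `Z`
  have hseq : ∀ b : ℕ → ZZ X, (∀ n, b n ∈ CZ) →
      ∃ σ : ℕ → ℕ, StrictMono σ ∧ ∃ L : ZZ X, Tendsto (b ∘ σ) atTop (𝓝 L) := by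
    intro b hb
    obtain ⟨σ, hσ, q, hqC, hconv⟩ := hrc (fun n => piL (b n)) hb
    refine ⟨σ, hσ, toZ q hqC, ?_⟩
    rw [tendsto_iff_norm_sub_tendsto_zero]
    refine hconv.congr fun n => ?_
    have := gdist_piL_eq (b (σ n)) (toZ q hqC)
    rw [piL_toZ] at this
    exact this
  have hclos : IsSeqCompact (closure CZ) := by
    intro b hb
    have happrox : ∀ n : ℕ, ∃ c ∈ CZ, dist (b n) c < 1 / ((n:ℝ) + 1) := fun n =>
      Metric.mem_closure_iff.1 (hb n) _ (by positivity)
    choose c hcC hcd using happrox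
    obtain ⟨σ, hσ, L, hLt⟩ := hseq c hcC
    have hLm : L ∈ closure CZ :=
      mem_closure_of_tendsto hLt (Eventually.of_forall fun n => hcC (σ n))
    refine ⟨L, hLm, σ, hσ, ?_⟩
    have hd0 : Tendsto (fun n => dist ((c ∘ σ) n) ((b ∘ σ) n)) atTop (𝓝 0) := by
      refine squeeze_zero (fun n => dist_nonneg) (fun n => ?_)
        tendsto_one_div_add_atTop_nhds_zero_nat
      rw [dist_comm]
      refine le_of_lt (lt_of_lt_of_le (hcd (σ n)) ?_)
      have h1 : (n:ℝ) ≤ (σ n : ℝ) := by exact_mod_cast hσ.le_apply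
      apply one_div_le_one_div_of_le (by positivity)
      linarith
    exact hLt.congr_dist hd0
  -- compactness of the closed convex hull
  have hKcpt : IsCompact K := by
    have h1 : TotallyBounded CZ := hclos.isCompact.totallyBounded.subset subset_closure
    have h2 : TotallyBounded (convexHull ℝ CZ) := totallyBounded_convexHull.2 h1
    exact TotallyBounded.isCompact_of_isClosed h2.closure isClosed_closure
  -- limits of elements of `K` are in `CbGSet`
  have hlimCbG : ∀ a ∈ K, piL a ∈ CbGSet ∧
      ∃ u : ℕ → ZZ X, (∀ m, u m ∈ convexHull ℝ CZ) ∧ Tendsto u atTop (𝓝 a) := by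
    intro a ha
    obtain ⟨u, hum, hut⟩ := mem_closure_iff_seq_limit.1 ha
    have hS := convexHull_CZ_subset (X := X) hPsub
    exact ⟨piL_mem_of_tendsto (fun k => hS (hum k)) hut, u, hum, hut⟩
  have hpiconv : ∀ b ∈ convexHull ℝ CZ, piL b ∈ convexHull ℝ P := by
    intro b hb
    have h2 : convexHull ℝ CZ ⊆ piL ⁻¹' (convexHull ℝ P) :=
      convexHull_min (fun c hc => subset_convexHull ℝ P hc)
        ((convex_convexHull ℝ P).linear_preimage piL)
    exact h2 hb
  -- the key inclusion, for each `n`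
  have hmain : ∀ n : ℕ,
      closure (convexHull ℝ (toWD ''
        {q : X →L[ℝ] ℝ | ∃ p ∈ P, p.1 xh ∈ Icc (0:ℝ) (1/(n:ℝ)) ∧ p.2 xh = q}))
      ⊆ (evW xh) '' (Kn n) := by
    intro n
    have hKncpt : IsCompact (Kn n) := hKcpt.of_isClosed_subset isClosed_closure (hKnK n)
    have himg : IsCompact ((evW xh) '' Kn n) := hKncpt.image (evW_continuous xh)
    have hconv : Convex ℝ ((evW xh) '' Kn n) :=
      ((convex_convexHull ℝ (CZn n)).closure).linear_image (evW xh)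
    refine closure_minimal (convexHull_min ?_ hconv) himg.isClosed
    rintro w ⟨φq, ⟨p, hpP, hpIcc, hpeq⟩, rfl⟩
    refine ⟨toZ p (hPsub hpP), subset_closure (subset_convexHull ℝ _ ?_), ?_⟩
    · refine ⟨?_, ?_⟩
      · rw [piL_toZ]; exact hpP
      · rw [piL_toZ]; exact hpIcc
    · show toWD (((toZ p (hPsub hpP)).2 : X → X →L[ℝ] ℝ) xh) = toWD φq
      rw [← hpeq]; rfl
  -- value bounds on `Kn n`
  have he1 : ∀ n : ℕ, ∀ b ∈ Kn n, (0 ≤ (b : ZZ X).1 xh ∧ (b : ZZ X).1 xh ≤ 1/(n:ℝ)) := by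
    intro n b hb
    have hsub : Kn n ⊆ (e1L xh) ⁻¹' (Icc (0:ℝ) (1/(n:ℝ))) := by
      refine closure_minimal (convexHull_min ?_
        ((convex_Icc _ _).linear_preimage (e1L xh)))
        (isClosed_Icc.preimage (e1L_continuous xh))
      intro c hc
      exact hc.2
    exact ⟨(hsub hb).1, (hsub hb).2⟩
  -- Part 1
  have hpart1 : (⋂ n ∈ {n : ℕ | 1 ≤ n},
        wcch {q : X →L[ℝ] ℝ | ∃ p ∈ P, p.1 xh ∈ Icc (0:ℝ) (1/(n:ℝ)) ∧ p.2 xh = q})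
      ⊆ {z : WeakDual ℝ X | ∃ ψ : (X → ℝ) × (X → X →L[ℝ] ℝ), ψ ∈ CbGSet ∧
          (∃ u : ℕ → (X → ℝ) × (X → X →L[ℝ] ℝ), (∀ n, u n ∈ convexHull ℝ P) ∧
            Filter.Tendsto (fun n => gNormDist (u n) ψ) Filter.atTop (𝓝 0)) ∧
          ψ.1 xh = 0 ∧ toWD (ψ.2 xh) = z} := by
    intro z hz
    rw [mem_iInter₂] at hz
    have hak : ∀ k : ℕ, ∃ b ∈ Kn (k+1), evW xh b = z := by
      intro k
      have h1 := hz (k+1) (Nat.le_add_left 1 k)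
      obtain ⟨b, hbK, hbz⟩ := hmain (k+1) h1
      exact ⟨b, hbK, hbz⟩
    choose aa haaK haaz using hak
    obtain ⟨a, haK, φ, hφ, hconv⟩ := hKcpt.tendsto_subseq (fun k => hKnK (k+1) (haaK k))
    have hz_a : evW xh a = z := by
      have h1 : Tendsto (evW xh ∘ (aa ∘ φ)) atTop (𝓝 (evW xh a)) :=
        ((evW_continuous xh).tendsto a).comp hconv
      have h2 : (evW xh ∘ (aa ∘ φ)) = fun _ => z := funext fun k => haaz (φ k)
      rw [h2] at h1
      exact tendsto_nhds_unique h1 tendsto_const_nhds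
    have he1lim : Tendsto (fun k => (aa (φ k)).1 xh) atTop (𝓝 (a.1 xh)) :=
      ((e1L_continuous xh).tendsto a).comp hconv
    have hbz2 : Tendsto (fun k => 1/((φ k : ℝ) + 1)) atTop (𝓝 0) :=
      tendsto_one_div_add_atTop_nhds_zero_nat.comp hφ.tendsto_atTop
    have hxh0 : a.1 xh = 0 := by
      have hle : a.1 xh ≤ 0 := by
        refine le_of_tendsto_of_tendsto' he1lim hbz2 fun k => ?_
        have h3 := (he1 (φ k + 1) _ (haaK (φ k))).2
        have h4 : (1:ℝ)/(((φ k + 1 : ℕ)):ℝ) = 1/((φ k : ℝ) + 1) := by push_cast; ring_nf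
        rw [h4] at h3
        exact h3
      have hge : 0 ≤ a.1 xh :=
        ge_of_tendsto he1lim (Eventually.of_forall fun k => (he1 _ _ (haaK (φ k))).1)
      linarith
    obtain ⟨hψC, u, humem, hut⟩ := hlimCbG a haK
    refine ⟨piL a, hψC, ⟨fun m => piL (u m), fun m => hpiconv _ (humem m), ?_⟩, hxh0, hz_a⟩
    refine (tendsto_iff_norm_sub_tendsto_zero.1 hut).congr fun m => ?_
    exact (gdist_piL_eq (u m) a).symm
  refine ⟨hpart1, ?_⟩
  intro hconvP hcomp
  apply Subset.antisymm
  · intro z hz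
    obtain ⟨ψ, hψC, ⟨u, humem, hut⟩, hψ0, hψz⟩ := hpart1 hz
    have humem' : ∀ n, u n ∈ P := by
      intro n
      have h1 := humem n
      rwa [hconvP.convexHull_eq] at h1
    obtain ⟨σ, hσ, q, hqP, hgd⟩ := hcomp u humem'
    have h1 : Tendsto ((fun m => toZ (u m) (hPsub (humem' m))) ∘ σ) atTop
        (𝓝 (toZ ψ hψC)) := by
      rw [tendsto_iff_norm_sub_tendsto_zero]
      refine (hut.comp hσ.tendsto_atTop).congr fun n => ?_
      have h2 := gdist_piL_eq (toZ (u (σ n)) (hPsub (humem' (σ n)))) (toZ ψ hψC)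
      rw [piL_toZ, piL_toZ] at h2
      exact h2
    have h2 : Tendsto ((fun m => toZ (u m) (hPsub (humem' m))) ∘ σ) atTop
        (𝓝 (toZ q (hPsub hqP))) := by
      rw [tendsto_iff_norm_sub_tendsto_zero]
      refine hgd.congr fun n => ?_
      have h3 := gdist_piL_eq (toZ (u (σ n)) (hPsub (humem' (σ n)))) (toZ q (hPsub hqP))
      rw [piL_toZ, piL_toZ] at h3
      exact h3
    have heq : toZ ψ hψC = toZ q (hPsub hqP) := tendsto_nhds_unique h1 h2
    have heq2 : ψ = q := by
      have h4 := congrArg piL heq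
      rwa [piL_toZ, piL_toZ] at h4
    exact ⟨ψ, by rw [heq2]; exact hqP, hψ0, hψz⟩
  · rintro z ⟨ψ, hψP, hψ0, hψz⟩
    refine mem_iInter₂.2 fun n hn => ?_
    refine subset_closure (subset_convexHull ℝ _ ?_)
    refine ⟨ψ.2 xh, ⟨ψ, hψP, ?_, rfl⟩, hψz⟩
    rw [hψ0]
    exact ⟨le_rfl, by positivity⟩


end Stmt8
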